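/- Let A : ℝ → Matrix (Fin n) (Fin n) ℂ be continuous, let Y : ℝ → Matrix (Fin n) (Fin n) ℂ satisfy Y(0) = 1 and HasDerivAt Y (A(s) * Y(s)) s for all s, and let t ≥ 0 with ∫_{s∈[0,t]} ‖A(s)‖ ds ≤ π. Then for every nonzero vector x ∈ EuclideanSpace ℂ (Fin n), Re ⟪Y(t)·x , x⟫ ≥ cos(∫_{s∈[0,t]} ‖A(s)‖ ds) · ‖Y(t)·x‖ · ‖x‖; i.e., the angle between Y(t)x and x is at most ∫₀^t ‖A(s)‖ ds. -/

import Mathlib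

open Real Set Filter intervalIntegral
open scoped Topology

local notation "⟪" x ", " y "⟫" => @inner ℝ _ _ x y

set_option maxHeartbeats 1000000 in
lemma angle_bound_aux {E : Type*} [NormedAddCommGroup E] [InnerProductSpace ℝ E]
    (u v : ℝ → E) (a : ℝ → ℝ) (ha : Continuous a) (ha0 : ∀ s, 0 ≤ a s)
    (hu : ∀ s, HasDerivAt u (v s) s) (hb : ∀ s, ‖v s‖ ≤ a s * ‖u s‖)
    (t : ℝ) (ht : 0 ≤ t) (hπ : (∫ s in (0:ℝ)..t, a s) ≤ π) (h0 : u 0 ≠ 0) :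
    Real.cos (∫ s in (0:ℝ)..t, a s) * (‖u t‖ * ‖u 0‖) ≤ ⟪u t, u 0⟫ := by
  set α : ℝ → ℝ := fun s => ∫ r in (0:ℝ)..s, a r with hαdef
  have hα : ∀ s, HasDerivAt α (a s) s := fun s => (ha.integral_hasStrictDerivAt 0 s).hasDerivAt
  have hαmono : ∀ {s s'}, s ≤ s' → α s ≤ α s' := by
    intro s s' hss
    have hadd : α s' = α s + ∫ r in s..s', a r :=
      (integral_add_adjacent_intervals (ha.intervalIntegrable 0 s)
        (ha.intervalIntegrable s s')).symm
    have hnn : 0 ≤ ∫ r in s..s', a r := intervalIntegral.integral_nonneg hss fun r _ => ha0 r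
    linarith
  have hα0 : α 0 = 0 := intervalIntegral.integral_same
  have hcu : Continuous u := by
    rw [continuous_iff_continuousAt]; exact fun s => (hu s).continuousAt
  -- nonvanishing for s ≥ 0
  have hupos : ∀ s, 0 ≤ s → 0 < ‖u s‖ := by
    intro s hs
    set q : ℝ → ℝ := fun s => ⟪u s, u s⟫ * Real.exp (2 * α s) with hq
    have hq' : ∀ s, HasDerivAt q ((⟪u s, v s⟫ + ⟪v s, u s⟫) * Real.exp (2 * α s)
        + ⟪u s, u s⟫ * (Real.exp (2 * α s) * (2 * a s))) s := fun s =>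
      ((hu s).inner ℝ (hu s)).mul ((Real.hasDerivAt_exp _).comp s ((hα s).const_mul 2))
    have hqmono : Monotone q := by
      apply monotone_of_deriv_nonneg (fun s => (hq' s).differentiableAt)
      intro s
      rw [(hq' s).deriv]
      have h1 : -(‖u s‖ * ‖v s‖) ≤ ⟪u s, v s⟫ :=
        (abs_le.mp (abs_real_inner_le_norm (u s) (v s))).1
      have h2 : ‖u s‖ * ‖v s‖ ≤ a s * (‖u s‖ * ‖u s‖) := by
        nlinarith [hb s, norm_nonneg (u s)]
      have h3 : 0 ≤ ⟪u s, v s⟫ + a s * ⟪u s, u s⟫ := by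
        rw [real_inner_self_eq_norm_mul_norm]; linarith
      have h4 : (⟪u s, v s⟫ + ⟪v s, u s⟫) * Real.exp (2 * α s)
          + ⟪u s, u s⟫ * (Real.exp (2 * α s) * (2 * a s))
          = Real.exp (2 * α s) * (2 * (⟪u s, v s⟫ + a s * ⟪u s, u s⟫)) := by
        rw [real_inner_comm (v s) (u s)]; ring
      rw [h4]
      exact mul_nonneg (Real.exp_pos _).le (by linarith)
    have hq0 : 0 < q 0 := by
      have h1 : (0:ℝ) < ⟪u 0, u 0⟫ := by
        rw [real_inner_self_eq_norm_mul_norm]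
        have := norm_pos_iff.mpr h0
        positivity
      have h2 := Real.exp_pos (2 * α 0)
      exact mul_pos h1 h2
    have hqs : 0 < q s := lt_of_lt_of_le hq0 (hqmono hs)
    by_contra hcon
    push_neg at hcon
    have : u s = 0 := norm_le_zero_iff.mp hcon
    rw [hq] at hqs
    simp only [this, inner_zero_left, zero_mul] at hqs
    exact lt_irrefl 0 hqs
  have hc0 : 0 < ‖u 0‖ := hupos 0 le_rfl
  have hsqrt : ∀ s, Real.sqrt ⟪u s, u s⟫ = ‖u s‖ := fun s => by
    rw [real_inner_self_eq_norm_mul_norm, Real.sqrt_mul_self (norm_nonneg _)]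
  -- the key perturbed estimate
  have key : ∀ ε : ℝ, 0 < ε → α t + ε * (t + 1) < π →
      Real.cos (α t + ε * (t + 1)) * (‖u t‖ * ‖u 0‖) ≤ ⟪u t, u 0⟫ := by
    intro ε hε hεπ
    set c := u 0 with hc
    set F : ℝ → ℝ := fun s =>
      ⟪u s, c⟫ - Real.cos (α s + (ε * s + ε)) * (Real.sqrt ⟪u s, u s⟫ * ‖c‖) with hFdef
    have hαcont : Continuous α := by
      rw [continuous_iff_continuousAt]; exact fun s => (hα s).continuousAt
    have hFc : Continuous F := by
      apply Continuous.sub (hcu.inner continuous_const)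
      apply Continuous.mul
      · exact Real.continuous_cos.comp
          (hαcont.add (((continuous_const.mul continuous_id).add continuous_const)))
      · exact (Real.continuous_sqrt.comp (hcu.inner hcu)).mul continuous_const
    have hεπ' : ε < π := by nlinarith [hαmono ht, hα0]
    have hF0 : 0 < F 0 := by
      have hcos : Real.cos ε < 1 := by
        have := Real.cos_lt_cos_of_nonneg_of_le_pi le_rfl hεπ'.le hε
        rwa [Real.cos_zero] at this
      have hF0eq : F 0 = ‖c‖ * ‖c‖ - Real.cos ε * (‖c‖ * ‖c‖) := by
        have h9 : Real.sqrt ⟪u 0, u 0⟫ = ‖u 0‖ := hsqrt 0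
        simp only [hFdef, hα0, mul_zero, zero_add, h9, ← hc,
          real_inner_self_eq_norm_mul_norm]
        rw [Real.sqrt_mul_self (norm_nonneg c)]
      rw [hF0eq]
      nlinarith [mul_pos (mul_pos hc0 hc0) (sub_pos.mpr hcos)]
    have hFt : 0 < F t := by
      by_contra hcon
      push_neg at hcon
      set S : Set ℝ := Icc 0 t ∩ {s | F s ≤ 0} with hS
      have hSne : S.Nonempty := ⟨t, ⟨ht, le_rfl⟩, hcon⟩
      have hSclosed : IsClosed S :=
        isClosed_Icc.inter (isClosed_le hFc continuous_const)
      have hSbdd : BddBelow S := ⟨0, fun s hs => hs.1.1⟩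
      set s₀ := sInf S with hs₀def
      have hs₀S : s₀ ∈ S := hSclosed.csInf_mem hSne hSbdd
      obtain ⟨⟨hs₀0, hs₀t⟩, hFs₀le⟩ := hs₀S
      have hs₀pos : 0 < s₀ := by
        rcases hs₀0.lt_or_eq with h | h
        · exact h
        · exfalso; rw [← h] at hFs₀le; exact absurd hFs₀le (not_le.mpr hF0)
      have hleft : ∀ s, 0 ≤ s → s < s₀ → 0 < F s := by
        intro s hs hss
        by_contra hcon2
        push_neg at hcon2
        have : s ∈ S := ⟨⟨hs, hss.le.trans hs₀t⟩, hcon2⟩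
        exact absurd (csInf_le hSbdd this) (not_le.mpr hss)
      have hFs₀ : F s₀ = 0 := by
        refine le_antisymm hFs₀le ?_
        have htend : Tendsto F (𝓝[<] s₀) (𝓝 (F s₀)) :=
          (hFc.tendsto s₀).mono_left nhdsWithin_le_nhds
        refine ge_of_tendsto htend ?_
        filter_upwards [Ioo_mem_nhdsLT hs₀pos] with s hs
        exact (hleft s hs.1.le hs.2).le
      -- derivative computation at s₀
      set N := ‖u s₀‖ with hN
      have hNpos : 0 < N := hupos s₀ hs₀0
      set θ := α s₀ + (ε * s₀ + ε) with hθ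
      have hθ0 : 0 < θ := by
        have := hαmono hs₀0; rw [hα0] at this
        nlinarith
      have hθπ : θ < π := by
        have h1 := hαmono hs₀t
        have h2 : ε * s₀ ≤ ε * t := mul_le_mul_of_nonneg_left hs₀t hε.le
        nlinarith
      have hsin : 0 < Real.sin θ := Real.sin_pos_of_pos_of_lt_pi hθ0 hθπ
      have hRpos : (0:ℝ) < ⟪u s₀, u s₀⟫ := by
        rw [real_inner_self_eq_norm_mul_norm, ← hN]; positivity
      have hRne : ⟪u s₀, u s₀⟫ ≠ 0 := hRpos.ne'
      have hinner_eq : ⟪u s₀, c⟫ = Real.cos θ * (N * ‖c‖) := by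
        have := hFs₀
        simp only [hFdef] at this
        rw [hsqrt s₀] at this
        linarith
      -- derivatives
      have h1 : HasDerivAt (fun s => ⟪u s, c⟫) (⟪v s₀, c⟫) s₀ := by
        have := (hu s₀).inner ℝ (hasDerivAt_const s₀ c)
        simpa using this
      have h2 : HasDerivAt (fun s => α s + (ε * s + ε)) (a s₀ + ε * 1) s₀ :=
        (hα s₀).add (((hasDerivAt_id s₀).const_mul ε).add_const ε)
      have h3 : HasDerivAt (fun s => Real.cos (α s + (ε * s + ε)))
          (-Real.sin θ * (a s₀ + ε * 1)) s₀ :=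
        by have h := (Real.hasDerivAt_cos θ).comp s₀ h2; exact h
      have h4 : HasDerivAt (fun s => Real.sqrt ⟪u s, u s⟫)
          (1 / (2 * Real.sqrt ⟪u s₀, u s₀⟫) * (⟪u s₀, v s₀⟫ + ⟪v s₀, u s₀⟫)) s₀ :=
        (Real.hasDerivAt_sqrt hRne).comp s₀ ((hu s₀).inner ℝ (hu s₀))
      have hFd : HasDerivAt F
          (⟪v s₀, c⟫ - (-Real.sin θ * (a s₀ + ε * 1) * (Real.sqrt ⟪u s₀, u s₀⟫ * ‖c‖)
            + Real.cos θ * (1 / (2 * Real.sqrt ⟪u s₀, u s₀⟫)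
              * (⟪u s₀, v s₀⟫ + ⟪v s₀, u s₀⟫) * ‖c‖))) s₀ :=
        h1.sub (h3.mul (h4.mul_const ‖c‖))
      set D := ⟪v s₀, c⟫ - (-Real.sin θ * (a s₀ + ε * 1) * (Real.sqrt ⟪u s₀, u s₀⟫ * ‖c‖)
            + Real.cos θ * (1 / (2 * Real.sqrt ⟪u s₀, u s₀⟫)
              * (⟪u s₀, v s₀⟫ + ⟪v s₀, u s₀⟫) * ‖c‖)) with hDdef
      have hDpos : 0 < D := by
        set k := Real.cos θ * ‖c‖ / N with hk
        set w := c - k • u s₀ with hwdef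
        have hcu_inner : ⟪c, u s₀⟫ = Real.cos θ * (N * ‖c‖) := by
          rw [real_inner_comm]; exact hinner_eq
        have hw2 : ‖w‖ ^ 2 = (Real.sin θ * ‖c‖) ^ 2 := by
          have hns := norm_sub_sq_real c (k • u s₀)
          rw [real_inner_smul_right, hcu_inner, norm_smul, Real.norm_eq_abs] at hns
          have h10 : (|k| * ‖u s₀‖) ^ 2 = k ^ 2 * N ^ 2 := by
            rw [mul_pow, sq_abs, ← hN]
          rw [h10] at hns
          have hk2 : k * N = Real.cos θ * ‖c‖ := by
            rw [hk]; field_simp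
          have hsq : Real.sin θ ^ 2 = 1 - Real.cos θ ^ 2 := Real.sin_sq θ
          rw [hwdef, hns]
          linear_combination (k * N - Real.cos θ * ‖c‖) * hk2 - ‖c‖ ^ 2 * hsq
        have hw : ‖w‖ = Real.sin θ * ‖c‖ := by
          have h5 : ‖w‖ = Real.sqrt (‖w‖ ^ 2) := (Real.sqrt_sq (norm_nonneg _)).symm
          rw [h5, hw2, Real.sqrt_sq (by positivity)]
        have h6 : ⟪v s₀, w⟫ = ⟪v s₀, c⟫ - k * ⟪v s₀, u s₀⟫ := by
          rw [hwdef, inner_sub_right, real_inner_smul_right]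
        have h7 : -(‖v s₀‖ * ‖w‖) ≤ ⟪v s₀, w⟫ :=
          (abs_le.mp (abs_real_inner_le_norm (v s₀) w)).1
        rw [hw, h6] at h7
        have h8 : ‖v s₀‖ * (Real.sin θ * ‖c‖) ≤ a s₀ * N * (Real.sin θ * ‖c‖) :=
          mul_le_mul_of_nonneg_right (hb s₀) (by positivity)
        have hkey : -(a s₀ * N * (Real.sin θ * ‖c‖)) ≤ ⟪v s₀, c⟫ - k * ⟪v s₀, u s₀⟫ := by
          linarith
        have hcomm : ⟪u s₀, v s₀⟫ = ⟪v s₀, u s₀⟫ := real_inner_comm _ _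
        have hDeq : D = (⟪v s₀, c⟫ - k * ⟪v s₀, u s₀⟫)
            + Real.sin θ * (a s₀ + ε) * (N * ‖c‖) := by
          rw [hDdef, hcomm, hsqrt s₀, hk, ← hN]
          field_simp
          ring
        have hpos : 0 < ε * Real.sin θ * N * ‖c‖ := by positivity
        rw [hDeq]
        nlinarith [hkey]
      -- slope contradiction
      have hslope := hasDerivAt_iff_tendsto_slope.mp hFd
      have htend2 : Tendsto (slope F s₀) (𝓝[<] s₀) (𝓝 D) :=
        hslope.mono_left (nhdsWithin_mono _ fun s hs => ne_of_lt hs)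
      have hev : ∀ᶠ s in 𝓝[<] s₀, slope F s₀ s ≤ 0 := by
        filter_upwards [Ioo_mem_nhdsLT hs₀pos] with s hs
        have hFs := hleft s hs.1.le hs.2
        rw [slope_def_field, hFs₀]
        apply div_nonpos_of_nonneg_of_nonpos (by linarith)
        linarith [hs.2]
      have : D ≤ 0 := le_of_tendsto htend2 hev
      linarith
    -- conclude from F t > 0
    simp only [hFdef, hsqrt t] at hFt
    have harg : α t + (ε * t + ε) = α t + ε * (t + 1) := by ring
    rw [harg] at hFt
    linarith
  -- limit ε → 0⁺
  by_cases hαt : α t < π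
  · have htend : Tendsto (fun ε : ℝ => Real.cos (α t + ε * (t + 1)) * (‖u t‖ * ‖u 0‖))
        (𝓝[>] (0:ℝ)) (𝓝 (Real.cos (α t) * (‖u t‖ * ‖u 0‖))) := by
      have hcont : Continuous fun ε : ℝ => Real.cos (α t + ε * (t + 1)) * (‖u t‖ * ‖u 0‖) := by
        continuity
      have := (hcont.tendsto 0).mono_left (nhdsWithin_le_nhds (s := Ioi (0:ℝ)))
      simpa using this
    refine le_of_tendsto htend ?_
    have hδ : 0 < (π - α t) / (t + 1) := div_pos (by linarith) (by linarith)
    filter_upwards [Ioo_mem_nhdsGT hδ] with ε hε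
    refine key ε hε.1 ?_
    have := (lt_div_iff₀ (by linarith : (0:ℝ) < t + 1)).mp hε.2
    linarith
  · have hαeq : α t = π := le_antisymm hπ (not_lt.mp hαt)
    rw [show (∫ s in (0:ℝ)..t, a s) = α t from rfl, hαeq, Real.cos_pi]
    have := (abs_le.mp (abs_real_inner_le_norm (u t) (u 0))).1
    linarith
open scoped Matrix.Norms.L2Operator

set_option maxHeartbeats 1000000 in
/-- If `Y' = A(s) Y`, `Y(0) = I` and `∫₀ᵗ ‖A(s)‖ ds ≤ π`, then for every nonzero vector `x`,
`Re ⟪Y(t) x, x⟫ ≥ cos (∫₀ᵗ ‖A(s)‖ ds) ‖Y(t) x‖ ‖x‖`, i.e. the angle between `Y(t) x` and `x`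
is at most `∫₀ᵗ ‖A(s)‖ ds`. -/
theorem angle_bound {n : ℕ} (A : ℝ → Matrix (Fin n) (Fin n) ℂ) (hA : Continuous A)
    (Y : ℝ → Matrix (Fin n) (Fin n) ℂ) (hY0 : Y 0 = 1)
    (hY : ∀ s, HasDerivAt Y (A s * Y s) s)
    (t : ℝ) (ht : 0 ≤ t) (hint : (∫ s in (0:ℝ)..t, ‖A s‖) ≤ Real.pi)
    (x : EuclideanSpace ℂ (Fin n)) (hx : x ≠ 0) :
    Real.cos (∫ s in (0:ℝ)..t, ‖A s‖) * ‖Matrix.toEuclideanLin (Y t) x‖ * ‖x‖ ≤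
      (inner ℂ (Matrix.toEuclideanLin (Y t) x) x : ℂ).re := by
  letI : InnerProductSpace ℝ (EuclideanSpace ℂ (Fin n)) := InnerProductSpace.complexToReal
  set u : ℝ → EuclideanSpace ℂ (Fin n) := fun s => Matrix.toEuclideanLin (Y s) x with hudef
  -- the linear map `M ↦ toEuclideanLin M x`
  let L : Matrix (Fin n) (Fin n) ℂ →ₗ[ℂ] EuclideanSpace ℂ (Fin n) :=
    { toFun := fun M => Matrix.toEuclideanLin M x
      map_add' := fun M N => by simp
      map_smul' := fun c M => by simp }
  have hmul : ∀ M N : Matrix (Fin n) (Fin n) ℂ,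
      Matrix.toEuclideanLin (M * N) x = Matrix.toEuclideanLin M (Matrix.toEuclideanLin N x) := by
    intro M N
    exact Matrix.toLin_mul_apply (v₁ := PiLp.basisFun 2 ℂ (Fin n))
      (v₂ := PiLp.basisFun 2 ℂ (Fin n)) (v₃ := PiLp.basisFun 2 ℂ (Fin n)) M N x
  let Lc : Matrix (Fin n) (Fin n) ℂ →L[ℂ] EuclideanSpace ℂ (Fin n) :=
    LinearMap.mkContinuous L ‖x‖ (fun M => by
      have := Matrix.l2_opNorm_mulVec M x
      calc ‖L M‖ ≤ ‖M‖ * ‖x‖ := this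
        _ = ‖x‖ * ‖M‖ := mul_comm _ _)
  have hud : ∀ s, HasDerivAt u (Matrix.toEuclideanLin (A s) (u s)) s := by
    intro s
    have h1 : HasDerivAt (fun r => Lc (Y r)) (Lc (A s * Y s)) s :=
      ((Lc.restrictScalars ℝ).hasFDerivAt (x := Y s)).comp_hasDerivAt s (hY s)
    have h2 : HasDerivAt u (Matrix.toEuclideanLin (A s * Y s) x) s := by
      simpa [hudef, Lc, L, Function.comp, LinearMap.mkContinuous_apply] using h1
    rw [hmul] at h2
    exact h2
  have hb : ∀ s, ‖Matrix.toEuclideanLin (A s) (u s)‖ ≤ ‖A s‖ * ‖u s‖ := fun s =>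
    Matrix.l2_opNorm_mulVec (A s) (u s)
  have h0 : u 0 = x := by
    rw [hudef]
    simp only [hY0, Matrix.toEuclideanLin_eq_toLin, Matrix.toLin_one, LinearMap.id_apply]
  have h0' : u 0 ≠ 0 := h0 ▸ hx
  have := angle_bound_aux u (fun s => Matrix.toEuclideanLin (A s) (u s)) (fun s => ‖A s‖)
    hA.norm (fun s => norm_nonneg _) hud hb t ht hint h0'
  rw [h0] at this
  have hre : @inner ℝ _ _ (u t) x = (inner ℂ (u t) x : ℂ).re := by
    rw [real_inner_eq_re_inner (𝕜 := ℂ) (u t) x, RCLike.re_to_complex]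
  rw [hre] at this
  calc Real.cos (∫ s in (0:ℝ)..t, ‖A s‖) * ‖u t‖ * ‖x‖
      = Real.cos (∫ s in (0:ℝ)..t, ‖A s‖) * (‖u t‖ * ‖x‖) := by ring
    _ ≤ (inner ℂ (u t) x : ℂ).re := this
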